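/- For every MBSP instance with synchronization parameter L = 0 and every valid schedule of that instance, the asynchronous cost of the schedule is at most its synchronous cost. -/

import Mathlib

namespace MBSP

/-- A transition (pebbling move) of a single processor. -/
inductive Op (ν : Type) where
  | load : ν → Op ν
  | save : ν → Op ν
  | compute : ν → Op ν
  | delete : ν → Op ν
deriving DecidableEq

/-- An MBSP instance: a DAG with compute weights `ω`, memory weights `μ`,
`P` processors, cache capacity `r`, communication cost `g` and synchronization cost `L`. -/
structure Inst (ν : Type) where
  edge : ν → ν → Prop
  ω : ν → ℝ
  μ : ν → ℝ
  P : ℕ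
  r : ℝ
  g : ℝ
  L : ℝ

variable {ν : Type} [DecidableEq ν]

def isSource (I : Inst ν) (v : ν) : Prop := ¬ ∃ u, I.edge u v

def isSink (I : Inst ν) (v : ν) : Prop := ¬ ∃ u, I.edge v u

def Acyclic (I : Inst ν) : Prop := ∀ v, ¬ Relation.TransGen I.edge v v

def opCost (I : Inst ν) : Op ν → ℝ
  | .load v => I.μ v * I.g
  | .save v => I.μ v * I.g
  | .compute v => I.ω v
  | .delete _ => 0

def applyOp (R B : Finset ν) : Op ν → Finset ν × Finset ν
  | .load v => (insert v R, B)
  | .save v => (R, insert v B)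
  | .compute v => (insert v R, B)
  | .delete v => (R.erase v, B)

def opOK (I : Inst ν) (R B : Finset ν) : Op ν → Prop
  | .load v => v ∈ B
  | .save v => v ∈ R
  | .compute v => (∃ u, I.edge u v) ∧ ∀ u, I.edge u v → u ∈ R
  | .delete _ => True

/-- The memory bound for a cache content `R`. -/
def memOK (I : Inst ν) (R : Finset ν) : Prop := ∑ v ∈ R, I.μ v ≤ I.r

/-- Run a sequence of transitions of one processor on a pair (cache, slow memory). -/
def run (R B : Finset ν) : List (Op ν) → Finset ν × Finset ν
  | [] => (R, B)
  | op :: rest => run (applyOp R B op).1 (applyOp R B op).2 rest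

/-- Validity of a sequence of transitions of one processor: every precondition holds
when the transition is applied and the memory bound holds throughout. -/
def seqValid (I : Inst ν) (R B : Finset ν) : List (Op ν) → Prop
  | [] => True
  | op :: rest => opOK I R B op ∧ memOK I (applyOp R B op).1 ∧
      seqValid I (applyOp R B op).1 (applyOp R B op).2 rest

/-- A superstep: for every processor, a compute phase (computes and deletes),
then a save phase, a delete phase and a load phase. -/
structure Superstep (ν : Type) (P : ℕ) where
  comp : Fin P → List (Op ν)
  save : Fin P → List ν
  del : Fin P → List ν
  load : Fin P → List ν

structure Config (ν : Type) (P : ℕ) where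
  R : Fin P → Finset ν
  B : Finset ν

abbrev Schedule (ν : Type) (P : ℕ) := List (Superstep ν P)

variable {P : ℕ}

def compOnly (l : List (Op ν)) : Prop :=
  ∀ op ∈ l, (∃ v, op = Op.compute v) ∨ (∃ v, op = Op.delete v)

def afterComp (c : Config ν P) (S : Superstep ν P) (p : Fin P) : Finset ν :=
  (run (c.R p) c.B (S.comp p)).1

/-- The shared slow memory after the save phases of all processors. -/
def newB (c : Config ν P) (S : Superstep ν P) : Finset ν :=
  c.B ∪ Finset.univ.biUnion (fun p => (S.save p).toFinset)

def afterDel (c : Config ν P) (S : Superstep ν P) (p : Fin P) : Finset ν :=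
  (S.del p).foldl Finset.erase (afterComp c S p)

def afterLoad (c : Config ν P) (S : Superstep ν P) (p : Fin P) : Finset ν :=
  afterDel c S p ∪ (S.load p).toFinset

/-- The configuration reached after executing a superstep. -/
def stepConfig (c : Config ν P) (S : Superstep ν P) : Config ν P :=
  ⟨fun p => afterLoad c S p, newB c S⟩

/-- Validity of a superstep at a configuration. -/
def ssValid (I : Inst ν) (c : Config ν I.P) (S : Superstep ν I.P) : Prop :=
  (∀ p, compOnly (S.comp p)) ∧
  (∀ p, seqValid I (c.R p) c.B (S.comp p)) ∧
  (∀ p, ∀ v ∈ S.save p, v ∈ afterComp c S p) ∧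
  (∀ p, ∀ v ∈ S.load p, v ∈ newB c S) ∧
  (∀ p, memOK I (afterLoad c S p))

def runSched (c : Config ν P) : Schedule ν P → Config ν P
  | [] => c
  | S :: rest => runSched (stepConfig c S) rest

def schedValidFrom (I : Inst ν) (c : Config ν I.P) : Schedule ν I.P → Prop
  | [] => True
  | S :: rest => ssValid I c S ∧ schedValidFrom I (stepConfig c S) rest

/-- `B` is exactly the set of sources of the DAG. -/
def initB (I : Inst ν) (B : Finset ν) : Prop := ∀ v, v ∈ B ↔ isSource I v

/-- A valid MBSP schedule: starts with empty caches and the sources in slow memory,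
every transition is legal and the memory bound holds throughout, and at the end
every sink is in slow memory. -/
def Valid (I : Inst ν) (sched : Schedule ν I.P) : Prop :=
  ∃ B0 : Finset ν, initB I B0 ∧
    schedValidFrom I ⟨fun _ => ∅, B0⟩ sched ∧
    ∀ v, isSink I v → v ∈ (runSched (⟨fun _ => ∅, B0⟩ : Config ν I.P) sched).B

def listCost (I : Inst ν) (l : List (Op ν)) : ℝ := (l.map (opCost I)).sum

def ioCost (I : Inst ν) (l : List ν) : ℝ := (l.map (fun v => I.μ v * I.g)).sum

/-- The synchronous cost of a superstep. -/
noncomputable def ssCost (I : Inst ν) (S : Superstep ν I.P) : ℝ :=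
  (⨆ p : Fin I.P, listCost I (S.comp p)) + (⨆ p : Fin I.P, ioCost I (S.save p)) +
    (⨆ p : Fin I.P, ioCost I (S.load p)) + I.L

/-- The synchronous cost of a schedule. -/
noncomputable def syncCost (I : Inst ν) (sched : Schedule ν I.P) : ℝ :=
  (sched.map (ssCost I)).sum

/-- Finishing times of the saves in a save phase starting at time `t`. -/
def saveFinishes (I : Inst ν) : ℝ → List ν → List (ν × ℝ)
  | _, [] => []
  | t, v :: rest => (v, t + I.μ v * I.g) :: saveFinishes I (t + I.μ v * I.g) rest

def minSaveTime (entries : List (ν × ℝ)) (v : ν) : Option ℝ :=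
  ((entries.filter (fun e => e.1 == v)).map Prod.snd).min?

/-- Finishing time of a load phase: each load waits for the value to be available
in slow memory (time `Γ v`). -/
def loadFold (I : Inst ν) (Γ : ν → Option ℝ) : ℝ → List ν → ℝ
  | t, [] => t
  | t, v :: rest => loadFold I Γ (max t ((Γ v).getD 0) + I.μ v * I.g) rest

/-- One superstep of the asynchronous execution: updates the finishing time of
every processor and the availability times `Γ` of the values in slow memory. -/
def asyncSS (I : Inst ν) (S : Superstep ν I.P)
    (st : (Fin I.P → ℝ) × (ν → Option ℝ)) : (Fin I.P → ℝ) × (ν → Option ℝ) :=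
  let t1 : Fin I.P → ℝ := fun p => st.1 p + listCost I (S.comp p)
  let entries : List (ν × ℝ) :=
    ((List.finRange I.P).map (fun p => saveFinishes I (t1 p) (S.save p))).flatten
  let Γ' : ν → Option ℝ := fun v => (st.2 v).orElse (fun _ => minSaveTime entries v)
  let t2 : Fin I.P → ℝ := fun p => t1 p + ioCost I (S.save p)
  (fun p => loadFold I Γ' (t2 p) (S.load p), Γ')

def asyncRun (I : Inst ν) (st : (Fin I.P → ℝ) × (ν → Option ℝ)) :
    Schedule ν I.P → (Fin I.P → ℝ) × (ν → Option ℝ)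
  | [] => st
  | S :: rest => asyncRun I (asyncSS I S st) rest

/-- The asynchronous cost (makespan) of a schedule. -/
noncomputable def asyncCost (I : Inst ν) (sched : Schedule ν I.P) : ℝ :=
  ⨆ p : Fin I.P, (asyncRun I (fun _ => (0 : ℝ), fun _ => none) sched).1 p

end MBSP

namespace MBSP


section Aux
variable {ν : Type} [DecidableEq ν]

lemma listCost_nonneg (I : Inst ν) (hω : ∀ v, 0 ≤ I.ω v) (hμ : ∀ v, 0 ≤ I.μ v)
    (hg : 0 ≤ I.g) (l : List (Op ν)) : 0 ≤ listCost I l := by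
  apply List.sum_nonneg
  intro x hx
  simp only [List.mem_map] at hx
  obtain ⟨op, _, rfl⟩ := hx
  cases op with
  | load v => exact mul_nonneg (hμ v) hg
  | save v => exact mul_nonneg (hμ v) hg
  | compute v => exact hω v
  | delete v => exact le_refl 0

lemma ioCost_nonneg (I : Inst ν) (hμ : ∀ v, 0 ≤ I.μ v) (hg : 0 ≤ I.g)
    (l : List ν) : 0 ≤ ioCost I l := by
  apply List.sum_nonneg
  intro x hx
  simp only [List.mem_map] at hx
  obtain ⟨v, _, rfl⟩ := hx
  exact mul_nonneg (hμ v) hg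

lemma saveFinishes_le (I : Inst ν) (hμ : ∀ v, 0 ≤ I.μ v) (hg : 0 ≤ I.g) :
    ∀ (l : List ν) (t : ℝ) (e : ν × ℝ), e ∈ saveFinishes I t l → e.2 ≤ t + ioCost I l := by
  intro l
  induction l with
  | nil => simp [saveFinishes]
  | cons v rest ih =>
    intro t e he
    simp only [saveFinishes, List.mem_cons] at he
    have hio : ioCost I (v :: rest) = I.μ v * I.g + ioCost I rest := by simp [ioCost]
    rcases he with rfl | he
    · simp only [hio]
      have := ioCost_nonneg I hμ hg rest
      linarith
    · have := ih (t + I.μ v * I.g) e he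
      rw [hio]; linarith

lemma loadFold_le (I : Inst ν) (hμ : ∀ v, 0 ≤ I.μ v) (hg : 0 ≤ I.g) (Γ : ν → Option ℝ) :
    ∀ (l : List ν) (t T : ℝ), (∀ v, (Γ v).getD 0 ≤ T) → t ≤ T →
      loadFold I Γ t l ≤ T + ioCost I l := by
  intro l
  induction l with
  | nil => intro t T _ ht; simp [loadFold, ioCost]; exact ht
  | cons v rest ih =>
    intro t T hΓ ht
    have hio : ioCost I (v :: rest) = I.μ v * I.g + ioCost I rest := by simp [ioCost]
    have hmg : 0 ≤ I.μ v * I.g := mul_nonneg (hμ v) hg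
    have h1 : max t ((Γ v).getD 0) + I.μ v * I.g ≤ T + I.μ v * I.g := by
      have := hΓ v
      have : max t ((Γ v).getD 0) ≤ T := max_le ht this
      linarith
    have h2 : ∀ u, (Γ u).getD 0 ≤ T + I.μ v * I.g := fun u => le_trans (hΓ u) (by linarith)
    have := ih (max t ((Γ v).getD 0) + I.μ v * I.g) (T + I.μ v * I.g) h2 h1
    simp only [loadFold]
    rw [hio]; linarith

lemma ssCost_nonneg (I : Inst ν) (hω : ∀ v, 0 ≤ I.ω v) (hμ : ∀ v, 0 ≤ I.μ v)
    (hg : 0 ≤ I.g) (hL : I.L = 0) (S : Superstep ν I.P) : 0 ≤ ssCost I S := by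
  have h1 : 0 ≤ ⨆ p : Fin I.P, listCost I (S.comp p) :=
    Real.iSup_nonneg fun p => listCost_nonneg I hω hμ hg _
  have h2 : 0 ≤ ⨆ p : Fin I.P, ioCost I (S.save p) :=
    Real.iSup_nonneg fun p => ioCost_nonneg I hμ hg _
  have h3 : 0 ≤ ⨆ p : Fin I.P, ioCost I (S.load p) :=
    Real.iSup_nonneg fun p => ioCost_nonneg I hμ hg _
  unfold ssCost; rw [hL]; linarith

lemma asyncRun_bound (I : Inst ν) (hω : ∀ v, 0 ≤ I.ω v) (hμ : ∀ v, 0 ≤ I.μ v)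
    (hg : 0 ≤ I.g) (hL : I.L = 0) :
    ∀ (sched : Schedule ν I.P) (st : (Fin I.P → ℝ) × (ν → Option ℝ)) (T : ℝ),
      0 ≤ T → (∀ p, st.1 p ≤ T) → (∀ v, ((st.2 v).getD 0) ≤ T) →
      (∀ p, (asyncRun I st sched).1 p ≤ T + syncCost I sched) ∧
      (∀ v, ((asyncRun I st sched).2 v).getD 0 ≤ T + syncCost I sched) := by
  intro sched
  induction sched with
  | nil =>
    intro st T hT h1 h2
    constructor
    · intro p; simp [asyncRun, syncCost]; exact h1 p
    · intro v; simp [asyncRun, syncCost]; exact h2 v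
  | cons S rest ih =>
    intro st T hT h1 h2
    set A := ⨆ p : Fin I.P, listCost I (S.comp p) with hA
    set B := ⨆ p : Fin I.P, ioCost I (S.save p) with hB
    set C := ⨆ p : Fin I.P, ioCost I (S.load p) with hC
    have hAle : ∀ p, listCost I (S.comp p) ≤ A := fun p =>
      le_ciSup (f := fun p => listCost I (S.comp p))
        (Set.Finite.bddAbove (Set.finite_range _)) p
    have hBle : ∀ p, ioCost I (S.save p) ≤ B := fun p =>
      le_ciSup (f := fun p => ioCost I (S.save p))
        (Set.Finite.bddAbove (Set.finite_range _)) p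
    have hCle : ∀ p, ioCost I (S.load p) ≤ C := fun p =>
      le_ciSup (f := fun p => ioCost I (S.load p))
        (Set.Finite.bddAbove (Set.finite_range _)) p
    have hA0 : 0 ≤ A := Real.iSup_nonneg fun p => listCost_nonneg I hω hμ hg _
    have hB0 : 0 ≤ B := Real.iSup_nonneg fun p => ioCost_nonneg I hμ hg _
    have hC0 : 0 ≤ C := Real.iSup_nonneg fun p => ioCost_nonneg I hμ hg _
    have hss : ssCost I S = A + B + C := by unfold ssCost; rw [hL]; ring
    -- notation from asyncSS
    set t1 : Fin I.P → ℝ := fun p => st.1 p + listCost I (S.comp p) with ht1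
    set entries : List (ν × ℝ) :=
      ((List.finRange I.P).map (fun p => saveFinishes I (t1 p) (S.save p))).flatten
      with hentries
    set Γ' : ν → Option ℝ :=
      fun v => (st.2 v).orElse (fun _ => minSaveTime entries v) with hΓ'
    set t2 : Fin I.P → ℝ := fun p => t1 p + ioCost I (S.save p) with ht2
    have hSSdef : asyncSS I S st = (fun p => loadFold I Γ' (t2 p) (S.load p), Γ') := rfl
    have hent : ∀ e ∈ entries, e.2 ≤ T + A + B := by
      intro e he
      rw [hentries] at he
      simp only [List.mem_flatten, List.mem_map] at he
      obtain ⟨l, ⟨p, _, rfl⟩, hel⟩ := he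
      have := saveFinishes_le I hμ hg (S.save p) (t1 p) e hel
      have h1p := h1 p
      have := hAle p
      have := hBle p
      simp only [ht1] at *
      linarith
    have hΓ'le : ∀ v, (Γ' v).getD 0 ≤ T + A + B := by
      intro v
      rw [hΓ']
      cases hsv : st.2 v with
      | some x =>
        simp only [hsv, Option.orElse]
        have := h2 v; rw [hsv] at this
        simp only [Option.getD] at this ⊢
        linarith
      | none =>
        simp only [hsv, Option.orElse]
        cases hmin : minSaveTime entries v with
        | none => simp; linarith
        | some x =>
          simp only [Option.getD]
          unfold minSaveTime at hmin
          have hx := List.min?_mem hmin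
          simp only [List.mem_map, List.mem_filter] at hx
          obtain ⟨e, ⟨he, _⟩, rfl⟩ := hx
          exact hent e he
    have hT' : 0 ≤ T + ssCost I S := by
      have := ssCost_nonneg I hω hμ hg hL S; linarith
    have h1' : ∀ p, (asyncSS I S st).1 p ≤ T + ssCost I S := by
      intro p
      rw [hSSdef]
      have ht2T : t2 p ≤ T + A + B := by
        have := h1 p; have := hAle p; have := hBle p
        simp only [ht2, ht1]; linarith
      have := loadFold_le I hμ hg Γ' (S.load p) (t2 p) (T + A + B) hΓ'le ht2T
      have := hCle p
      rw [hss]; simp only []; linarith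
    have h2' : ∀ v, ((asyncSS I S st).2 v).getD 0 ≤ T + ssCost I S := by
      intro v
      rw [hSSdef]
      have := hΓ'le v
      rw [hss]; simp only []; linarith
    have := ih (asyncSS I S st) (T + ssCost I S) hT' h1' h2'
    have hsync : syncCost I (S :: rest) = ssCost I S + syncCost I rest := by
      simp [syncCost]
    constructor
    · intro p
      have := this.1 p
      simp only [asyncRun]
      rw [hsync]; linarith
    · intro v
      have := this.2 v
      simp only [asyncRun]
      rw [hsync]; linarith

end Aux

/-- For every MBSP instance with `L = 0` and every valid schedule,
the asynchronous cost is at most the synchronous cost. -/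
theorem statement_12 {ν : Type} [Fintype ν] [DecidableEq ν] (I : Inst ν)
    (hω : ∀ v, 0 ≤ I.ω v) (hμ : ∀ v, 0 ≤ I.μ v) (hr : 0 ≤ I.r) (hg : 0 ≤ I.g)
    (hac : Acyclic I) (hL : I.L = 0)
    (sched : Schedule ν I.P) (hval : Valid I sched) :
    asyncCost I sched ≤ syncCost I sched := by
  have key := asyncRun_bound I hω hμ hg hL sched
    (fun _ => (0 : ℝ), fun _ => none) 0 le_rfl (fun _ => le_rfl) (fun _ => le_rfl)
  have hsync0 : 0 ≤ syncCost I sched := by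
    apply List.sum_nonneg
    intro x hx
    simp only [List.mem_map] at hx
    obtain ⟨S, _, rfl⟩ := hx
    exact ssCost_nonneg I hω hμ hg hL S
  apply Real.iSup_le _ hsync0
  intro p
  have := key.1 p
  linarith

end MBSP
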